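/- For the monomials g_l(t) = t^l, for every integer p ≥ 1 and all z, s ∈ ℂ, the identity Σ_{l=1}^{p} binom(p, l) z^{p−l} 𝔄(g_l; s) = 𝔇(g_p; s + z, z) holds, where 𝔄(g; s) = (2π)^{−2} ∫₀¹ [g(st) − (1−t)g(0) − t g(s)]/(t(1−t)) dt and 𝔇(g; s, s₁) = (2π)^{−2} ∫₀¹ [g(st + s₁(1−t)) − t g(s) − (1−t) g(s₁)]/(t(1−t)) dt. -/

import Mathlib

noncomputable section

/-- The coefficient `𝔄(g; s) = (2π)⁻² ∫₀¹ [g(st) - (1-t)g(0) - t g(s)] / (t(1-t)) dt`. -/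
noncomputable def couA (g : ℂ → ℂ) (s : ℂ) : ℂ :=
  (((2 * Real.pi) ^ 2 : ℝ) : ℂ)⁻¹ *
    ∫ t in (0 : ℝ)..1, (g ((t : ℂ) * s) - (1 - (t : ℂ)) * g 0 - (t : ℂ) * g s) /
      ((t : ℂ) * (1 - (t : ℂ)))

/-- The coefficient
`𝔇(g; s, s₁) = (2π)⁻² ∫₀¹ [g(st + s₁(1-t)) - t g(s) - (1-t) g(s₁)] / (t(1-t)) dt`. -/
noncomputable def couD (g : ℂ → ℂ) (s s₁ : ℂ) : ℂ :=
  (((2 * Real.pi) ^ 2 : ℝ) : ℂ)⁻¹ *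
    ∫ t in (0 : ℝ)..1,
      (g ((t : ℂ) * s + (1 - (t : ℂ)) * s₁) - (t : ℂ) * g s - (1 - (t : ℂ)) * g s₁) /
        ((t : ℂ) * (1 - (t : ℂ)))


open MeasureTheory

/-- Binomial expansion summed over `Icc 1 p`. -/
lemma binom_key (p : ℕ) (z x : ℂ) :
    ∑ l ∈ Finset.Icc 1 p, (p.choose l : ℂ) * z ^ (p - l) * x ^ l = (x + z) ^ p - z ^ p := by
  have h := add_pow x z p
  have hIcc : Finset.Icc 1 p = Finset.Ico 1 (p + 1) := by
    rw [Finset.Ico_add_one_right_eq_Icc]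
  rw [h, Finset.sum_range_succ', hIcc, Finset.sum_Ico_eq_sum_range]
  simp only [Nat.add_sub_cancel, pow_zero, one_mul, Nat.choose_zero_right, Nat.cast_one, mul_one,
    Nat.sub_zero]
  have : ∀ i ∈ Finset.range p,
      (p.choose (1 + i) : ℂ) * z ^ (p - (1 + i)) * x ^ (1 + i)
        = x ^ (i + 1) * z ^ (p - (i + 1)) * (p.choose (i + 1) : ℂ) := by
    intro i _
    rw [Nat.add_comm 1 i]
    ring
  rw [Finset.sum_congr rfl this]
  ring

/-- The `A`-integrand equals a polynomial off `{0, 1}`. -/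
lemma fA_eq (s : ℂ) (m : ℕ) (t : ℝ) (ht : (t : ℂ) * (1 - (t : ℂ)) ≠ 0) :
    (((t : ℂ) * s) ^ (m + 1) - (1 - (t : ℂ)) * (0 : ℂ) ^ (m + 1) - (t : ℂ) * s ^ (m + 1)) /
        ((t : ℂ) * (1 - (t : ℂ)))
      = -s ^ (m + 1) * ∑ k ∈ Finset.range m, (t : ℂ) ^ k := by
  rw [div_eq_iff ht]
  have geom := geom_sum_mul (t : ℂ) m
  simp only [zero_pow (Nat.succ_ne_zero m)]
  linear_combination (-(s ^ (m + 1)) * (t : ℂ)) * geom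

lemma fA_integrable (s : ℂ) (l : ℕ) (hl : 1 ≤ l) :
    IntervalIntegrable (fun t : ℝ =>
      (((t : ℂ) * s) ^ l - (1 - (t : ℂ)) * (0 : ℂ) ^ l - (t : ℂ) * s ^ l) /
        ((t : ℂ) * (1 - (t : ℂ)))) volume 0 1 := by
  obtain ⟨m, rfl⟩ : ∃ m, l = m + 1 := ⟨l - 1, (Nat.succ_pred_eq_of_pos hl).symm⟩
  have hcont : Continuous fun t : ℝ => -s ^ (m + 1) * ∑ k ∈ Finset.range m, (t : ℂ) ^ k := by
    fun_prop
  refine (hcont.intervalIntegrable 0 1).congr_ae ?_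
  have hnull : (volume : Measure ℝ) ({0, 1} : Set ℝ) = 0 :=
    ((Set.finite_singleton (1:ℝ)).insert 0).measure_zero _
  refine Filter.EventuallyEq.filter_mono ?_ (ae_mono Measure.restrict_le_self)
  rw [Filter.eventuallyEq_iff_exists_mem]
  refine ⟨({0, 1} : Set ℝ)ᶜ, ?_, ?_⟩
  · rw [mem_ae_iff, compl_compl]; exact hnull
  · intro t ht
    simp only [Set.mem_compl_iff, Set.mem_insert_iff, Set.mem_singleton_iff, not_or] at ht
    have h0 : (t : ℂ) ≠ 0 := by exact_mod_cast ht.1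
    have h1 : (1 : ℂ) - (t : ℂ) ≠ 0 := by
      intro h
      apply ht.2
      have : (t : ℂ) = 1 := by linear_combination -h
      exact_mod_cast this
    exact (fA_eq s m t (mul_ne_zero h0 h1)).symm

/-- For the monomials `g_l(t) = t^l`, every integer `p ≥ 1` and all
`z, s ∈ ℂ`:  `Σ_{l=1}^{p} (p choose l) z^{p-l} 𝔄(g_l; s) = 𝔇(g_p; s + z, z)`. -/
theorem statement16 (p : ℕ) (hp : 1 ≤ p) (z s : ℂ) :
    ∑ l ∈ Finset.Icc 1 p, (p.choose l : ℂ) * z ^ (p - l) * couA (fun w => w ^ l) s =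
      couD (fun w => w ^ p) (s + z) z := by
  unfold couA couD
  set K : ℂ := (((2 * Real.pi) ^ 2 : ℝ) : ℂ)⁻¹ with hK
  have step1 : ∀ l ∈ Finset.Icc 1 p,
      (p.choose l : ℂ) * z ^ (p - l) * (K *
        ∫ t in (0 : ℝ)..1, (((t : ℂ) * s) ^ l - (1 - (t : ℂ)) * (0 : ℂ) ^ l - (t : ℂ) * s ^ l) /
          ((t : ℂ) * (1 - (t : ℂ))))
      = K * ∫ t in (0 : ℝ)..1,
          (p.choose l : ℂ) * z ^ (p - l) *
            ((((t : ℂ) * s) ^ l - (1 - (t : ℂ)) * (0 : ℂ) ^ l - (t : ℂ) * s ^ l) /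
              ((t : ℂ) * (1 - (t : ℂ)))) := by
    intro l hl
    rw [intervalIntegral.integral_const_mul]
    ring
  rw [Finset.sum_congr rfl step1, ← Finset.mul_sum]
  congr 1
  rw [← intervalIntegral.integral_finset_sum]
  · apply intervalIntegral.integral_congr
    intro t _
    beta_reduce
    by_cases ht : (t : ℂ) * (1 - (t : ℂ)) = 0
    · have ht' : (t : ℂ) = 0 ∨ (t : ℂ) = 1 := by
        rcases mul_eq_zero.mp ht with h | h
        · exact Or.inl h
        · right; linear_combination -h
      rcases ht' with h | h
      · rw [h]
        have hz : ∀ l ∈ Finset.Icc 1 p, (p.choose l : ℂ) * z ^ (p - l) *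
            ((((0 : ℂ) * s) ^ l - (1 - (0 : ℂ)) * (0 : ℂ) ^ l - (0 : ℂ) * s ^ l) /
              ((0 : ℂ) * (1 - (0 : ℂ)))) = 0 := by
          intro l hl
          have hl1 : l ≠ 0 := by
            have := (Finset.mem_Icc.mp hl).1; omega
          simp [zero_pow hl1]
        rw [Finset.sum_eq_zero hz]
        simp
      · rw [h]
        simp
    · simp only [← mul_div_assoc, ← Finset.sum_div]
      have hbase : (t : ℂ) * (s + z) + (1 - (t : ℂ)) * z = (t : ℂ) * s + z := by ring
      rw [hbase]
      congr 1
      have hz : ∀ l ∈ Finset.Icc 1 p,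
          (p.choose l : ℂ) * z ^ (p - l) *
            ((((t : ℂ) * s) ^ l - (1 - (t : ℂ)) * (0 : ℂ) ^ l - (t : ℂ) * s ^ l))
          = (p.choose l : ℂ) * z ^ (p - l) * ((t : ℂ) * s) ^ l
            - (t : ℂ) * ((p.choose l : ℂ) * z ^ (p - l) * s ^ l) := by
        intro l hl
        have hl1 : l ≠ 0 := by
          have := (Finset.mem_Icc.mp hl).1; omega
        rw [zero_pow hl1]
        ring
      rw [Finset.sum_congr rfl hz, Finset.sum_sub_distrib, ← Finset.mul_sum,
        binom_key, binom_key]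
      ring
  · intro l hl
    exact ((fA_integrable s l (Finset.mem_Icc.mp hl).1).const_mul _)

end
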